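/- Let k, N be positive integers and p a prime. For any integer n >= N, sum_{i=0}^{φ(p^N)-1} B_{n+i}^{(-k)} ≡ 0 (mod p^N), where φ is Euler's totient function. -/
import Mathlib


/-- Stirling numbers of the second kind. -/
def S2 : ℕ → ℕ → ℕ
  | 0, 0 => 1
  | 0, _ + 1 => 0
  | _ + 1, 0 => 0
  | n + 1, m + 1 => S2 n m + (m + 1) * S2 n (m + 1)
/-- Poly-Bernoulli number with negative upper index: `B_n^{(-k)}`. -/
def Bneg (n k : ℕ) : ℤ :=
  (-1 : ℤ) ^ n * ∑ m ∈ Finset.range (n + 1),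
    (-1 : ℤ) ^ m * (Nat.factorial m : ℤ) * (S2 n m : ℤ) * ((m : ℤ) + 1) ^ k

open Finset

def Vaux (n m : ℕ) : ℤ := ∑ j ∈ range (m+1), (-1:ℤ)^j * (m.choose j) * (j:ℤ)^n

def Waux (n m : ℕ) : ℤ := ∑ j ∈ range (m+1), (-1:ℤ)^j * (m.choose j) * ((j:ℤ)+1)^n

lemma S2_eq_zero : ∀ n m : ℕ, n < m → S2 n m = 0 := by
  intro n
  induction n with
  | zero => intro m hm; match m, hm with
            | m+1, _ => rfl
  | succ n ih =>
      intro m hm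
      match m, hm with
      | m+1, hm =>
        show S2 n m + (m + 1) * S2 n (m + 1) = 0
        rw [ih m (by omega), ih (m+1) (by omega)]
        ring

lemma Vaux_zero (m : ℕ) : Vaux 0 m = if m = 0 then 1 else 0 := by
  rw [← Int.alternating_sum_range_choose (n := m)]
  exact sum_congr rfl (fun j _ => by rw [pow_zero, mul_one])

lemma Waux_eq (n m : ℕ) : Waux n m = Vaux n m - Vaux n (m+1) := by
  have h1 : Vaux n (m+1) = (0:ℤ)^n
      + ∑ j ∈ range (m+1), (-1:ℤ)^(j+1) * ((m+1).choose (j+1)) * ((j:ℤ)+1)^n := by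
    rw [Vaux, Finset.sum_range_succ' (fun j => (-1:ℤ)^j * ((m+1).choose j) * (j:ℤ)^n) (m+1)]
    simp only [Nat.choose_zero_right, Nat.cast_one, pow_zero, Nat.cast_zero]
    push_cast
    ring
  have h2 : ∀ j, ((m+1).choose (j+1) : ℤ) = (m.choose j : ℤ) + (m.choose (j+1) : ℤ) := by
    intro j; rw [Nat.choose_succ_succ]; push_cast; ring
  have h3 : ∑ j ∈ range (m+1), (-1:ℤ)^j * (m.choose (j+1)) * ((j:ℤ)+1)^n
      = (0:ℤ)^n - Vaux n m := by
    have hlast : ∑ j ∈ range (m+1), (-1:ℤ)^j * (m.choose (j+1)) * ((j:ℤ)+1)^n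
        = ∑ j ∈ range m, (-1:ℤ)^j * (m.choose (j+1)) * ((j:ℤ)+1)^n := by
      rw [Finset.sum_range_succ, Nat.choose_succ_self]
      simp
    have hV : Vaux n m = (0:ℤ)^n
        + ∑ j ∈ range m, (-1:ℤ)^(j+1) * (m.choose (j+1)) * ((j:ℤ)+1)^n := by
      rw [Vaux, Finset.sum_range_succ' (fun j => (-1:ℤ)^j * (m.choose j) * (j:ℤ)^n) m]
      simp only [Nat.choose_zero_right, Nat.cast_one, pow_zero, Nat.cast_zero]
      push_cast
      ring
    rw [hlast]
    rw [hV]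
    rw [Finset.sum_congr rfl (fun j _ => by ring_nf :
      ∀ j ∈ range m, (-1:ℤ)^(j+1) * (m.choose (j+1)) * ((j:ℤ)+1)^n
        = -((-1:ℤ)^j * (m.choose (j+1)) * ((j:ℤ)+1)^n))]
    rw [Finset.sum_neg_distrib]
    ring
  rw [h1]
  have : ∑ j ∈ range (m+1), (-1:ℤ)^(j+1) * ((m+1).choose (j+1)) * ((j:ℤ)+1)^n
      = -Waux n m - (∑ j ∈ range (m+1), (-1:ℤ)^j * (m.choose (j+1)) * ((j:ℤ)+1)^n) := by
    rw [Waux, ← Finset.sum_neg_distrib, ← Finset.sum_sub_distrib]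
    refine sum_congr rfl (fun j _ => ?_)
    rw [h2 j]
    ring
  rw [this, h3]
  ring

lemma Vaux_succ_succ (n m : ℕ) : Vaux (n+1) (m+1) = -((m:ℤ)+1) * Waux n m := by
  have key : ∀ j : ℕ, (((m+1).choose (j+1)) : ℤ) * ((j:ℤ)+1) = ((m:ℤ)+1) * (m.choose j) := by
    intro j
    have h := Nat.add_one_mul_choose_eq m j
    have h2 : ((Nat.succ m * Nat.choose m j : ℕ) : ℤ)
        = ((Nat.choose (m+1) (j+1) * (j+1) : ℕ) : ℤ) := by rw [h]
    push_cast at h2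
    linarith
  have hterm : ∀ j ∈ range (m+1),
      (-1:ℤ)^(j+1) * (((m+1).choose (j+1) : ℕ) : ℤ) * (((j+1 : ℕ)) : ℤ)^(n+1)
        = -((m:ℤ)+1) * ((-1:ℤ)^j * (m.choose j) * ((j:ℤ)+1)^n) := by
    intro j _
    have h3 : (((m+1).choose (j+1)) : ℤ) * ((j:ℤ)+1)^(n+1)
        = ((m:ℤ)+1) * (m.choose j) * ((j:ℤ)+1)^n := by
      calc (((m+1).choose (j+1)) : ℤ) * ((j:ℤ)+1)^(n+1)
          = ((((m+1).choose (j+1)) : ℤ) * ((j:ℤ)+1)) * ((j:ℤ)+1)^n := by ring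
        _ = ((m:ℤ)+1) * (m.choose j) * ((j:ℤ)+1)^n := by rw [key]
    push_cast
    calc (-1:ℤ)^(j+1) * (((m+1).choose (j+1)):ℤ) * ((j:ℤ)+1)^(n+1)
        = (-1:ℤ)^(j+1) * ((((m+1).choose (j+1)):ℤ) * ((j:ℤ)+1)^(n+1)) := by ring
      _ = (-1:ℤ)^(j+1) * (((m:ℤ)+1) * (m.choose j) * ((j:ℤ)+1)^n) := by rw [h3]
      _ = -((m:ℤ)+1) * ((-1:ℤ)^j * (m.choose j) * ((j:ℤ)+1)^n) := by ring
  rw [Vaux, Finset.sum_range_succ' (fun j => (-1:ℤ)^j * ((m+1).choose j) * (j:ℤ)^(n+1)) (m+1)]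
  show (∑ j ∈ range (m+1), (-1:ℤ)^(j+1) * (((m+1).choose (j+1) : ℕ) : ℤ) * (((j+1 : ℕ)) : ℤ)^(n+1)) + (-1:ℤ)^0 * (((m+1).choose 0 : ℕ) : ℤ) * (((0:ℕ)) : ℤ)^(n+1) = -((m:ℤ)+1) * Waux n m
  rw [Finset.sum_congr rfl hterm, Waux, Finset.mul_sum]
  simp

lemma V_eq : ∀ n m : ℕ, (-1:ℤ)^m * (Nat.factorial m) * S2 n m = Vaux n m := by
  intro n
  induction n with
  | zero =>
      intro m
      rw [Vaux_zero]
      match m with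
      | 0 => simp [S2]
      | m+1 => simp [S2, S2_eq_zero]
  | succ n ih =>
      intro m
      match m with
      | 0 =>
          show (1:ℤ) * (1:ℕ) * (S2 (n+1) 0 : ℤ) = Vaux (n+1) 0
          rw [show S2 (n+1) 0 = 0 from rfl]
          rw [Vaux]
          simp
      | m+1 =>
          rw [Vaux_succ_succ, Waux_eq, ← ih m, ← ih (m+1)]
          show (-1:ℤ)^(m+1) * ((m+1).factorial) * ((S2 n m + (m + 1) * S2 n (m + 1) : ℕ) : ℤ)
            = -((m:ℤ)+1) * ((-1:ℤ)^m * (Nat.factorial m) * S2 n m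
                - (-1:ℤ)^(m+1) * (Nat.factorial (m+1)) * S2 n (m+1))
          rw [Nat.factorial_succ]
          push_cast
          ring

def Gaux (n m : ℕ) : ℤ := ∑ j ∈ range (m+1), (-1:ℤ)^j * (m.choose j) * (-(j:ℤ))^n

lemma Gaux_eq (n m : ℕ) : Gaux n m = (-1:ℤ)^n * ((-1:ℤ)^m * (Nat.factorial m) * S2 n m) := by
  rw [V_eq, Vaux, Gaux, Finset.mul_sum]
  refine Finset.sum_congr rfl (fun j _ => ?_)
  rw [neg_pow]
  ring

lemma Bneg_eq (n k M : ℕ) (h : n ≤ M) :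
    Bneg n k = ∑ m ∈ range (M+1), ((m:ℤ)+1)^k * Gaux n m := by
  have hsub : range (n+1) ⊆ range (M+1) := Finset.range_subset_range.mpr (by omega)
  rw [← Finset.sum_subset hsub (fun m hm hnm => ?_)]
  · rw [Bneg, Finset.mul_sum]
    exact Finset.sum_congr rfl (fun m _ => by rw [Gaux_eq]; ring)
  · rw [Gaux_eq, S2_eq_zero n m ?_]
    · simp
    · simp only [Finset.mem_range] at hm hnm; omega

lemma geom_sum_mul_range (x : ℤ) (a b : ℕ) :
    ∑ i ∈ range (a*b), x^i = (∑ i ∈ range a, x^i) * (∑ r ∈ range b, (x^a)^r) := by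
  induction b with
  | zero => simp
  | succ b ih =>
      rw [Nat.mul_succ, Finset.sum_range_add, ih, Finset.sum_range_succ]
      have : ∀ s ∈ range a, x^(a*b+s) = x^(a*b) * x^s := fun s _ => pow_add x _ _
      rw [Finset.sum_congr rfl this, ← Finset.mul_sum, ← pow_mul]
      ring

lemma dvd_sum_geom (y : ℤ) (p : ℕ) (hy : (p:ℤ) ∣ y - 1) :
    (p:ℤ) ∣ ∑ r ∈ range p, y^r := by
  have h1 : (∑ r ∈ range p, y^r) - (p:ℤ) = ∑ r ∈ range p, (y^r - 1) := by
    rw [Finset.sum_sub_distrib]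
    simp
  have h2 : (p:ℤ) ∣ ∑ r ∈ range p, (y^r - 1) :=
    Finset.dvd_sum (fun r _ => dvd_trans hy (by simpa using sub_dvd_pow_sub_pow y 1 r))
  have := dvd_add h2 (dvd_refl (p:ℤ))
  rw [← h1] at this
  simpa using this

lemma dvd_geom_sum_pow (x : ℤ) (p : ℕ) (hx : (p:ℤ) ∣ x - 1) :
    ∀ m : ℕ, (p:ℤ)^m ∣ ∑ i ∈ range (p^m), x^i := by
  intro m
  induction m with
  | zero => simp
  | succ m ih =>
      rw [show p^(m+1) = p^m * p from pow_succ p m, geom_sum_mul_range, pow_succ]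
      exact mul_dvd_mul ih (dvd_sum_geom _ _ (dvd_trans hx (by simpa using sub_dvd_pow_sub_pow x 1 (p^m))))

lemma mod_pred_of_dvd {p j : ℕ} (hp : 2 ≤ p) (h : p ∣ j + 1) : j % p = p - 1 := by
  obtain ⟨t, ht⟩ := h
  match t with
  | 0 => omega
  | s+1 =>
    have hj : j = p * s + (p-1) := by rw [Nat.mul_add, Nat.mul_one] at ht; omega
    rw [hj, Nat.mul_add_mod]
    exact Nat.mod_eq_of_lt (by omega)

lemma dvd_succ_of_mod_pred {p j : ℕ} (hp : 2 ≤ p) (h : j % p = p - 1) : p ∣ j + 1 := by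
  have h2 := Nat.div_add_mod j p
  exact ⟨j / p + 1, by rw [Nat.mul_add, Nat.mul_one]; omega⟩

lemma lucas_dvd {p : ℕ} (hp : p.Prime) {m j : ℕ} (hj : j % p = p - 1)
    (hm : m % p ≠ p - 1) : p ∣ Nat.choose m j := by
  haveI : Fact p.Prime := ⟨hp⟩
  have h := Choose.choose_modEq_choose_mod_mul_choose_div_nat (p := p) (n := m) (k := j)
  rw [hj] at h
  have hmp : m % p < p - 1 := by
    have := Nat.mod_lt m hp.pos
    omega
  rw [Nat.choose_eq_zero_of_lt hmp, zero_mul] at h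
  exact (Nat.modEq_zero_iff_dvd).mp h

lemma unit_case (p N : ℕ) (hp : p.Prime) (hN : 0 < N) (j : ℕ) (hj : ¬ p ∣ j)
    (hj1 : ¬ p ∣ (j+1)) :
    (p:ℤ)^N ∣ ∑ i ∈ range (Nat.totient (p^N)), (-(j:ℤ))^i := by
  haveI : NeZero (p^N) := ⟨pow_ne_zero N hp.pos.ne'⟩
  set x : ℤ := -(j:ℤ) with hxdef
  set T := Nat.totient (p^N) with hT
  -- Euler
  have hy : IsUnit ((x : ℤ) : ZMod (p^N)) := by
    have : ((x : ℤ) : ZMod (p^N)) = -((j : ℕ) : ZMod (p^N)) := by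
      rw [hxdef]; push_cast; ring
    rw [this]
    exact (((ZMod.isUnit_iff_coprime j (p^N)).mpr
      (((Nat.Prime.coprime_iff_not_dvd hp).mpr hj).symm.pow_right N))).neg
  have hpow : ((x : ℤ) : ZMod (p^N))^T = 1 := by
    have h1 := ZMod.pow_totient hy.unit
    have h2 := congrArg (Units.val) h1
    rw [Units.val_pow_eq_pow_val, IsUnit.unit_spec, Units.val_one] at h2
    exact h2
  have hdvd1 : ((p^N : ℕ) : ℤ) ∣ x^T - 1 := by
    rw [← ZMod.intCast_zmod_eq_zero_iff_dvd]
    push_cast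
    rw [hpow]
    ring
  have hco : IsCoprime ((p:ℤ)^N) (x - 1) := by
    apply IsCoprime.pow_left
    rw [Int.isCoprime_iff_gcd_eq_one]
    have hx1 : x - 1 = -((j:ℤ)+1) := by rw [hxdef]; ring
    rw [hx1, Int.gcd]
    simp only [Int.natAbs_neg, Int.natAbs_natCast]
    have : ((j:ℤ)+1).natAbs = j + 1 := by
      have : ((j:ℤ)+1) = ((j+1 : ℕ) : ℤ) := by push_cast; ring
      rw [this, Int.natAbs_natCast]
    rw [this]
    exact (Nat.Prime.coprime_iff_not_dvd hp).mpr hj1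
  have hgs : (∑ i ∈ range T, x^i) * (x - 1) = x^T - 1 := geom_sum_mul x T
  have : (p:ℤ)^N ∣ (∑ i ∈ range T, x^i) * (x - 1) := by
    rw [hgs]
    have : ((p^N : ℕ) : ℤ) = (p:ℤ)^N := by push_cast; ring
    rw [← this]
    exact hdvd1
  exact hco.dvd_of_dvd_mul_right this

/-- Vanishing of totient-length sums of poly-Bernoulli numbers with negative
upper index. -/
theorem polyBernoulli_neg_sum_vanish (k N : ℕ) (hk : 0 < k) (hN : 0 < N)
    (p : ℕ) (hp : p.Prime) (n : ℕ) (hn : N ≤ n) :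
    (∑ i ∈ Finset.range (Nat.totient (p ^ N)), Bneg (n + i) k) ≡ 0 [ZMOD (p : ℤ) ^ N] := by
  rw [Int.modEq_zero_iff_dvd]
  set T := Nat.totient (p^N) with hT
  rw [Finset.sum_congr rfl (fun i hi =>
    Bneg_eq (n+i) k (n+T) (by simp only [Finset.mem_range] at hi; omega))]
  rw [Finset.sum_comm]
  apply Finset.dvd_sum
  intro m _
  have hswap : ∑ i ∈ range T, ((m:ℤ)+1)^k * Gaux (n+i) m
      = ∑ j ∈ range (m+1), (((m:ℤ)+1)^k * ((-1:ℤ)^j * (m.choose j)))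
          * ((-(j:ℤ))^n * ∑ i ∈ range T, (-(j:ℤ))^i) := by
    simp_rw [Gaux, Finset.mul_sum]
    rw [Finset.sum_comm]
    refine Finset.sum_congr rfl fun j _ => ?_
    refine Finset.sum_congr rfl fun i _ => ?_
    rw [pow_add]
    ring
  rw [hswap]
  apply Finset.dvd_sum
  intro j _
  set C : ℤ := ((m:ℤ)+1)^k * ((-1:ℤ)^j * (m.choose j)) with hC
  set A : ℤ := (-(j:ℤ))^n with hA
  set S : ℤ := ∑ i ∈ range T, (-(j:ℤ))^i with hS
  by_cases hpj : p ∣ j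
  · -- p^N divides A
    have h1 : (p:ℤ)^n ∣ A := by
      rw [hA]
      exact pow_dvd_pow_of_dvd ((dvd_neg).mpr (Int.natCast_dvd_natCast.mpr hpj)) n
    exact ((dvd_trans (pow_dvd_pow _ hn) h1).mul_right S).mul_left C
  · by_cases hj1 : p ∣ (j+1)
    · -- j ≡ -1 mod p
      have hSdvd : (p:ℤ)^(N-1) ∣ S := by
        have hx : (p:ℤ) ∣ (-(j:ℤ)) - 1 := by
          have h2 : (p:ℤ) ∣ ((j+1 : ℕ) : ℤ) := Int.natCast_dvd_natCast.mpr hj1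
          have h3 : (-(j:ℤ)) - 1 = -(((j+1 : ℕ) : ℤ)) := by push_cast; ring
          rw [h3]
          exact h2.neg_right
        rw [hS, hT, Nat.totient_prime_pow hp hN, geom_sum_mul_range]
        exact (dvd_geom_sum_pow _ p hx (N-1)).mul_right _
      have hc : (p:ℤ) ∣ C := by
        by_cases hm : m % p = p - 1
        · have hpm : p ∣ m + 1 := dvd_succ_of_mod_pred hp.two_le hm
          have : (p:ℤ) ∣ ((m:ℤ)+1)^k := by
            apply dvd_pow _ hk.ne'
            have : ((m:ℤ)+1) = ((m+1 : ℕ) : ℤ) := by push_cast; ring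
            rw [this]
            exact Int.natCast_dvd_natCast.mpr hpm
          exact this.mul_right _
        · have : (p:ℤ) ∣ (m.choose j : ℤ) :=
            Int.natCast_dvd_natCast.mpr (lucas_dvd hp (mod_pred_of_dvd hp.two_le hj1) hm)
          exact (this.mul_left _).mul_left _
      have hNN : (p:ℤ)^N = (p:ℤ) * (p:ℤ)^(N-1) := by
        conv_lhs => rw [show N = 1 + (N-1) by omega]
        rw [pow_add, pow_one]
      have hterm : C * (A * S) = (C * A) * S := by ring
      rw [hterm, hNN]
      exact mul_dvd_mul (hc.mul_right A) hSdvd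
    · -- unit case
      have := unit_case p N hp hN j hpj hj1
      rw [← hT] at this
      exact ((this.mul_left A)).mul_left C
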